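/- Let G be a graph on finite vertex set 𝒱 with probability distribution P, whose connected components are G₁,…,G_k with P(Gᵢ) = Σ_{x ∈ V(Gᵢ)} P(x) > 0, and let Pᵢ(x) = P(x)/P(Gᵢ) for x ∈ V(Gᵢ). Then the graph entropy satisfies H_G(X) = Σᵢ P(Gᵢ) · H_{Gᵢ}(Xᵢ), where H_G(X) = min I(W;X) over random variables W taking values in independent sets of G with X ∈ W almost surely. -/

import Mathlib

/-- Graph entropy `H_G(X) = min_{X ∈ W ∈ Γ(G)} I(W;X)`: the infimum of the
mutual information `I(W;X)` over conditional distributions `q(w|x)` supported on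
independent sets `w` of `G` containing `x`. -/
noncomputable def graphEntropy {V : Type*} [Fintype V] [DecidableEq V]
    (G : SimpleGraph V) (P : V → ℝ) : ℝ :=
  sInf { r : ℝ | ∃ q : V → Finset V → ℝ,
    (∀ v s, 0 ≤ q v s) ∧ (∀ v, ∑ s : Finset V, q v s = 1) ∧
    (∀ v s, 0 < q v s → v ∈ s ∧ (↑s : Set V).Pairwise (fun a b => ¬ G.Adj a b)) ∧
    r = ∑ v : V, ∑ s : Finset V,
          P v * q v s * Real.log (q v s / (∑ v' : V, P v' * q v' s)) }

open Real Finset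

set_option linter.unusedSectionVars false

lemma log_sum_ineq {α : Type*} (t : Finset α) (a b : α → ℝ)
    (ha : ∀ x ∈ t, 0 ≤ a x) (hb : ∀ x ∈ t, 0 ≤ b x)
    (hab : ∀ x ∈ t, 0 < a x → 0 < b x) :
    (∑ x ∈ t, a x) * Real.log ((∑ x ∈ t, a x) / (∑ x ∈ t, b x)) ≤
      ∑ x ∈ t, a x * Real.log (a x / b x) := by
  classical
  rcases eq_or_lt_of_le (Finset.sum_nonneg ha) with h0 | hApos
  · have hall : ∀ x ∈ t, a x = 0 :=
      fun x hx => (Finset.sum_eq_zero_iff_of_nonneg ha).mp h0.symm x hx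
    rw [← h0, zero_mul]
    exact Finset.sum_nonneg fun x hx => by rw [hall x hx, zero_mul]
  · set A := ∑ x ∈ t, a x with hA
    set B := ∑ x ∈ t, b x with hB
    set t' := t.filter (fun x => 0 < a x) with ht'
    have hsub : t' ⊆ t := Finset.filter_subset _ _
    have hmem : ∀ x ∈ t', 0 < a x ∧ 0 < b x := by
      intro x hx
      have h1 := (Finset.mem_filter.mp hx).2
      exact ⟨h1, hab x (hsub hx) h1⟩
    have haA : ∑ x ∈ t', a x = A := by
      rw [hA]
      apply Finset.sum_filter_of_ne
      intro x hx h
      exact (ha x hx).lt_of_ne (Ne.symm h)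
    have ht'ne : t'.Nonempty := by
      by_contra h
      rw [Finset.not_nonempty_iff_eq_empty] at h
      rw [h, Finset.sum_empty] at haA
      exact absurd haA.symm (ne_of_gt hApos)
    set B' := ∑ x ∈ t', b x with hB'
    have hB'pos : 0 < B' := Finset.sum_pos (fun x hx => (hmem x hx).2) ht'ne
    have hB'B : B' ≤ B := Finset.sum_le_sum_of_subset_of_nonneg hsub
      (fun x hx _ => hb x hx)
    have hjensen := ConcaveOn.le_map_sum (strictConcaveOn_log_Ioi.concaveOn)
      (t := t') (w := fun x => a x / A) (p := fun x => b x / a x)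
      (fun x hx => div_nonneg (ha x (hsub hx)) hApos.le)
      (by rw [← Finset.sum_div, haA, div_self (ne_of_gt hApos)])
      (fun x hx => Set.mem_Ioi.mpr (div_pos (hmem x hx).2 (hmem x hx).1))
    simp only [smul_eq_mul] at hjensen
    have hsum_p : ∑ x ∈ t', a x / A * (b x / a x) = B' / A := by
      rw [hB', Finset.sum_div]
      apply Finset.sum_congr rfl
      intro x hx
      rw [div_mul_div_comm, mul_comm A (a x),
        mul_div_mul_left (b x) A (ne_of_gt (hmem x hx).1)]
    rw [hsum_p] at hjensen
    -- hjensen : ∑ x ∈ t', a x / A * log (b x / a x) ≤ log (B' / A)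
    have key : A * Real.log (A / B) ≤ ∑ x ∈ t', a x * Real.log (a x / b x) := by
      have h1 : ∑ x ∈ t', a x * Real.log (a x / b x)
          = A * ∑ x ∈ t', a x / A * (- Real.log (b x / a x)) := by
        rw [Finset.mul_sum]
        apply Finset.sum_congr rfl
        intro x hx
        rw [← Real.log_inv, inv_div]
        field_simp
      rw [h1]
      have h2 : Real.log (B' / A) ≤ Real.log (B / A) :=
        Real.log_le_log (div_pos hB'pos hApos) (by gcongr)
      have h3 : Real.log (A / B) = - Real.log (B / A) := by
        rw [← Real.log_inv, inv_div]
      rw [h3]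
      have : - Real.log (B / A) ≤ ∑ x ∈ t', a x / A * (- Real.log (b x / a x)) := by
        have := neg_le_neg (hjensen.trans h2)
        rw [← Finset.sum_neg_distrib] at this
        convert this using 2 with x
        · rfl
        · ring
      exact mul_le_mul_of_nonneg_left this hApos.le
    refine le_trans key (Finset.sum_le_sum_of_subset_of_nonneg hsub ?_)
    intro x hx hnx
    have hax : a x = 0 := by
      by_contra h
      exact hnx (Finset.mem_filter.mpr ⟨hx, (ha x hx).lt_of_ne (Ne.symm h)⟩)
    rw [hax, zero_mul]


section
variable {V : Type*} [Fintype V] [DecidableEq V] {k : ℕ}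

noncomputable def MuI (P : V → ℝ) (q : V → Finset V → ℝ) : ℝ :=
  ∑ v : V, ∑ s : Finset V,
    P v * q v s * Real.log (q v s / (∑ v' : V, P v' * q v' s))

def Feas (G : SimpleGraph V) (q : V → Finset V → ℝ) : Prop :=
  (∀ v s, 0 ≤ q v s) ∧ (∀ v, ∑ s : Finset V, q v s = 1) ∧
  (∀ v s, 0 < q v s → v ∈ s ∧ (↑s : Set V).Pairwise (fun a b => ¬ G.Adj a b))

lemma graphEntropy_eq (G : SimpleGraph V) (P : V → ℝ) :
    graphEntropy G P = sInf { r : ℝ | ∃ q, Feas G q ∧ r = MuI P q } := by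
  unfold graphEntropy Feas MuI
  congr 1
  ext r
  simp only [Set.mem_setOf_eq, and_assoc]

/-- cancel positive factor inside a `x*log(x/y)` expression, with 0-convention -/
lemma cancel_log_term (p x y : ℝ) (hp : 0 ≤ p) :
    (p * x) * Real.log ((p * x) / (p * y)) = p * x * Real.log (x / y) := by
  rcases eq_or_lt_of_le hp with h | h
  · rw [← h]; ring_nf
  · rw [mul_div_mul_left _ _ (ne_of_gt h)]

lemma MuI_nonneg (P : V → ℝ) (hP0 : ∀ v, 0 ≤ P v) (hP1 : ∑ v, P v = 1)
    (q : V → Finset V → ℝ) (hq0 : ∀ v s, 0 ≤ q v s)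
    (hq1 : ∀ v, ∑ s : Finset V, q v s = 1) : 0 ≤ MuI P q := by
  classical
  set Qm : Finset V → ℝ := fun s => ∑ v' : V, P v' * q v' s with hQm
  have hQm0 : ∀ s, 0 ≤ Qm s := fun s =>
    Finset.sum_nonneg fun v _ => mul_nonneg (hP0 v) (hq0 v s)
  have hQmge : ∀ v s, P v * q v s ≤ Qm s := fun v s =>
    Finset.single_le_sum (fun v' _ => mul_nonneg (hP0 v') (hq0 v' s)) (mem_univ v)
  have key := log_sum_ineq (univ : Finset (V × Finset V))
    (fun x => P x.1 * q x.1 x.2) (fun x => P x.1 * Qm x.2)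
    (fun x _ => mul_nonneg (hP0 x.1) (hq0 x.1 x.2))
    (fun x _ => mul_nonneg (hP0 x.1) (hQm0 x.2))
    (fun x _ hpos' => by
      have hpos : 0 < P x.1 * q x.1 x.2 := hpos'
      have h1 : 0 < P x.1 := by
        rcases eq_or_lt_of_le (hP0 x.1) with h | h
        · exfalso; rw [← h, zero_mul] at hpos; exact lt_irrefl 0 hpos
        · exact h
      exact mul_pos h1 (lt_of_lt_of_le hpos (hQmge x.1 x.2)))
  have hsa : ∑ x : V × Finset V, P x.1 * q x.1 x.2 = 1 := by
    rw [Fintype.sum_prod_type]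
    simp_rw [← Finset.mul_sum, hq1, mul_one, hP1]
  have hsb : ∑ x : V × Finset V, P x.1 * Qm x.2 = 1 := by
    rw [Fintype.sum_prod_type]
    simp_rw [← Finset.mul_sum]
    have : ∑ s : Finset V, Qm s = 1 := by
      rw [hQm, Finset.sum_comm]
      simp_rw [← Finset.mul_sum, hq1, mul_one, hP1]
    simp_rw [this, mul_one, hP1]
  rw [hsa, hsb, div_one, Real.log_one, mul_zero] at key
  calc (0:ℝ) ≤ ∑ x : V × Finset V, (P x.1 * q x.1 x.2) *
        Real.log ((P x.1 * q x.1 x.2) / (P x.1 * Qm x.2)) := key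
    _ = MuI P q := by
        rw [MuI, Fintype.sum_prod_type]
        exact Finset.sum_congr rfl fun v _ => Finset.sum_congr rfl fun s _ =>
          cancel_log_term (P v) (q v s) (Qm s) (hP0 v)

lemma Feas_singleton (G : SimpleGraph V) :
    Feas G (fun v s => if s = {v} then 1 else 0) := by
  refine ⟨fun v s => by positivity, fun v => by simp, fun v s h => ?_⟩
  have hs : s = {v} := by by_contra hne; simp [hne] at h
  subst hs
  refine ⟨Finset.mem_singleton_self v, ?_⟩
  intro a ha b hb hab
  simp only [Finset.coe_singleton, Set.mem_singleton_iff] at ha hb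
  exact absurd (ha.trans hb.symm) hab

lemma graphEntropy_set_nonempty (G : SimpleGraph V) (P : V → ℝ) :
    { r : ℝ | ∃ q, Feas G q ∧ r = MuI P q }.Nonempty :=
  ⟨MuI P (fun v s => if s = {v} then 1 else 0), _, Feas_singleton G, rfl⟩

lemma graphEntropy_bddBelow (G : SimpleGraph V) (P : V → ℝ)
    (hP0 : ∀ v, 0 ≤ P v) (hP1 : ∑ v, P v = 1) :
    BddBelow { r : ℝ | ∃ q, Feas G q ∧ r = MuI P q } := by
  refine ⟨0, fun r hr => ?_⟩
  obtain ⟨q, ⟨h0, h1, _⟩, rfl⟩ := hr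
  exact MuI_nonneg P hP0 hP1 q h0 h1

lemma graphEntropy_le (G : SimpleGraph V) (P : V → ℝ)
    (hP0 : ∀ v, 0 ≤ P v) (hP1 : ∑ v, P v = 1)
    (q : V → Finset V → ℝ) (hq : Feas G q) :
    graphEntropy G P ≤ MuI P q := by
  rw [graphEntropy_eq]
  exact csInf_le (graphEntropy_bddBelow G P hP0 hP1) ⟨q, hq, rfl⟩

lemma le_graphEntropy (G : SimpleGraph V) (P : V → ℝ) (x : ℝ)
    (h : ∀ q, Feas G q → x ≤ MuI P q) : x ≤ graphEntropy G P := by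
  rw [graphEntropy_eq]
  refine le_csInf (graphEntropy_set_nonempty G P) ?_
  rintro r ⟨q, hq, rfl⟩
  exact h q hq



def finsetPiEquiv (c : V → Fin k) :
    Finset V ≃ ∀ i : Fin k, Finset {v // c v = i} where
  toFun s i := s.subtype (fun v => c v = i)
  invFun p := Finset.univ.filter (fun v => (⟨v, rfl⟩ : {x // c x = c v}) ∈ p (c v))
  left_inv s := by ext v; simp [Finset.mem_subtype]
  right_inv p := by
    funext i; ext a
    obtain ⟨v, h⟩ := a
    subst h
    simp [Finset.mem_subtype]

lemma mem_finsetPiEquiv (c : V → Fin k) (s : Finset V) (i : Fin k)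
    (a : {v // c v = i}) : a ∈ finsetPiEquiv c s i ↔ ↑a ∈ s := Finset.mem_subtype

lemma sum_pi_prod (c : V → Fin k) (g : ∀ j : Fin k, Finset {v // c v = j} → ℝ) :
    ∑ p : (∀ j : Fin k, Finset {v // c v = j}), ∏ j : Fin k, g j (p j)
      = ∏ j : Fin k, ∑ t : Finset {v // c v = j}, g j t := by
  classical
  rw [Finset.prod_univ_sum, Fintype.piFinset_univ]

lemma sum_pi_single (c : V → Fin k) (i : Fin k)
    (F : Finset {v // c v = i} → ℝ) (m : ∀ j : Fin k, Finset {v // c v = j} → ℝ)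
    (hm : ∀ j, ∑ t : Finset {v // c v = j}, m j t = 1) :
    ∑ p : (∀ j : Fin k, Finset {v // c v = j}),
        F (p i) * ∏ j ∈ Finset.univ.erase i, m j (p j)
      = ∑ t : Finset {v // c v = i}, F t := by
  classical
  have h1 : ∀ p : (∀ j : Fin k, Finset {v // c v = j}),
      F (p i) * ∏ j ∈ Finset.univ.erase i, m j (p j)
        = ∏ j : Fin k, Function.update m i F j (p j) := by
    intro p
    rw [← Finset.mul_prod_erase Finset.univ _ (Finset.mem_univ i)]
    congr 1
    · rw [Function.update_self]
    · exact Finset.prod_congr rfl fun j hj => by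
        rw [Function.update_of_ne (Finset.mem_erase.mp hj).1]
  simp_rw [h1]
  rw [sum_pi_prod c (Function.update m i F),
    ← Finset.mul_prod_erase Finset.univ _ (Finset.mem_univ i), Function.update_self]
  have h2 : ∏ j ∈ Finset.univ.erase i,
      (∑ t : Finset {v // c v = j}, Function.update m i F j t) = 1 :=
    Finset.prod_eq_one fun j hj => by
      rw [Function.update_of_ne (Finset.mem_erase.mp hj).1]; exact hm j
  rw [h2, mul_one]

lemma upper_construction (G : SimpleGraph V) (c : V → Fin k)
    (hc : ∀ u v : V, G.Reachable u v ↔ c u = c v)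
    (P : V → ℝ) (hP0 : ∀ v, 0 ≤ P v) (hP1 : ∑ v, P v = 1)
    (hpos : ∀ i : Fin k, 0 < ∑ v ∈ Finset.univ.filter (fun v => c v = i), P v)
    (q : ∀ i : Fin k, {v // c v = i} → Finset {v // c v = i} → ℝ)
    (hq : ∀ i, Feas (G.comap (Subtype.val : {v // c v = i} → V)) (q i)) :
    ∃ Q : V → Finset V → ℝ, Feas G Q ∧
      MuI P Q = ∑ i : Fin k,
        (∑ v ∈ Finset.univ.filter (fun v => c v = i), P v) *
          MuI (fun v : {v // c v = i} =>
              P v.1 / ∑ v' ∈ Finset.univ.filter (fun v' => c v' = i), P v') (q i) := by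
  classical
  set E := finsetPiEquiv c with hE
  set PG : Fin k → ℝ := fun i => ∑ v ∈ Finset.univ.filter (fun v => c v = i), P v with hPG
  have hPGpos : ∀ i, 0 < PG i := hpos
  have hPGne : ∀ i, PG i ≠ 0 := fun i => ne_of_gt (hPGpos i)
  set m : ∀ j : Fin k, Finset {v // c v = j} → ℝ :=
    fun j t => ∑ v' : {v // c v = j}, (P v'.1 / PG j) * q j v' t with hm
  set Q : V → Finset V → ℝ := fun v s =>
    q (c v) ⟨v, rfl⟩ (E s (c v)) * ∏ j ∈ Finset.univ.erase (c v), m j (E s j) with hQdef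
  have hq0 : ∀ i v s, 0 ≤ q i v s := fun i => (hq i).1
  have hq1 : ∀ i v, ∑ s, q i v s = 1 := fun i => (hq i).2.1
  have hsubPG : ∀ i, ∑ v' : {v // c v = i}, P v'.1 = PG i := fun i =>
    (Finset.sum_subtype _ (by simp) P).symm
  have hPisum : ∀ i, ∑ v' : {v // c v = i}, P v'.1 / PG i = 1 := fun i => by
    rw [← Finset.sum_div, hsubPG, div_self (hPGne i)]
  have hm0 : ∀ j t, 0 ≤ m j t := fun j t =>
    Finset.sum_nonneg fun v' _ =>
      mul_nonneg (div_nonneg (hP0 _) (hPGpos j).le) (hq0 j v' t)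
  have hm1 : ∀ j, ∑ t, m j t = 1 := fun j => by
    rw [hm]
    rw [Finset.sum_comm]
    simp_rw [← Finset.mul_sum, hq1, mul_one]
    exact hPisum j
  have hQeq' : ∀ (i : Fin k) (v' : {x // c x = i}) (s : Finset V),
      Q ↑v' s = q i v' (E s i) * ∏ j ∈ Finset.univ.erase i, m j (E s j) := by
    rintro i ⟨v, rfl⟩ s; rfl
  have hQ0 : ∀ v s, 0 ≤ Q v s := fun v s =>
    mul_nonneg (hq0 _ _ _) (Finset.prod_nonneg fun j _ => hm0 j _)
  have hQ1 : ∀ v, ∑ s, Q v s = 1 := by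
    intro v
    rw [← Equiv.sum_comp E.symm (Q v)]
    have : ∀ p, Q v (E.symm p) =
        q (c v) ⟨v, rfl⟩ (p (c v)) * ∏ j ∈ Finset.univ.erase (c v), m j (p j) := by
      intro p
      rw [hQdef]
      simp only [Equiv.apply_symm_apply]
    simp_rw [this]
    rw [sum_pi_single c (c v) (q (c v) ⟨v, rfl⟩) m hm1]
    exact hq1 (c v) _
  have hsupp : ∀ v s, 0 < Q v s →
      v ∈ s ∧ (↑s : Set V).Pairwise (fun a b => ¬ G.Adj a b) := by
    intro v s h
    have hne := mul_ne_zero_iff.mp (ne_of_gt h)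
    have hq_pos : 0 < q (c v) ⟨v, rfl⟩ (E s (c v)) :=
      lt_of_le_of_ne (hq0 _ _ _) (Ne.symm hne.1)
    have hprod_ne := hne.2
    have hwit : ∀ j : Fin k, ∃ w : {x // c x = j}, 0 < q j w (E s j) := by
      intro j
      by_cases hj : j = c v
      · subst hj; exact ⟨_, hq_pos⟩
      · have hmne : m j (E s j) ≠ 0 :=
          Finset.prod_ne_zero_iff.mp hprod_ne j
            (Finset.mem_erase.mpr ⟨hj, Finset.mem_univ j⟩)
        have hmj : 0 < m j (E s j) := lt_of_le_of_ne (hm0 j _) (Ne.symm hmne)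
        by_contra hcon
        push_neg at hcon
        have hz : ∀ w : {x // c x = j}, (P w.1 / PG j) * q j w (E s j) = 0 := by
          intro w
          have hqz : q j w (E s j) = 0 :=
            le_antisymm (hcon w) (hq0 j w _)
          rw [hqz, mul_zero]
        exact hmne (Finset.sum_eq_zero (fun w _ => hz w))
    constructor
    · have := ((hq (c v)).2.2 _ _ hq_pos).1
      exact (mem_finsetPiEquiv c s (c v) _).mp this
    · intro a ha b hb hab hadj
      have hcab : c a = c b := (hc a b).mp hadj.reachable
      obtain ⟨w, hw⟩ := hwit (c a)
      have hpw := ((hq (c a)).2.2 _ _ hw).2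
      have haa : (⟨a, rfl⟩ : {x // c x = c a}) ∈ E s (c a) :=
        (mem_finsetPiEquiv c s (c a) _).mpr ha
      have hbb : (⟨b, hcab.symm⟩ : {x // c x = c a}) ∈ E s (c a) :=
        (mem_finsetPiEquiv c s (c a) _).mpr hb
      refine hpw haa hbb ?_ hadj
      intro hcon
      exact hab (congrArg Subtype.val hcon)
  have hPGsum : ∑ i, PG i = 1 := by
    rw [hPG]
    rw [Finset.sum_fiberwise Finset.univ c P]
    exact hP1
  have hQmarg : ∀ s, (∑ v' : V, P v' * Q v' s) = ∏ j, m j (E s j) := by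
    intro s
    rw [← Finset.sum_fiberwise Finset.univ c (fun v' => P v' * Q v' s)]
    have step : ∀ i, ∑ v' ∈ Finset.univ.filter (fun x => c x = i), P v' * Q v' s
        = PG i * ∏ j, m j (E s j) := by
      intro i
      rw [Finset.sum_subtype (p := fun x => c x = i) _ (by simp) (fun v' => P v' * Q v' s)]
      have h3 : ∀ v' : {x // c x = i}, P ↑v' * Q ↑v' s
          = (P ↑v' * q i v' (E s i)) * ∏ j ∈ Finset.univ.erase i, m j (E s j) := by
        intro v'
        rw [hQeq' i v' s]; ring
      simp_rw [h3]
      rw [← Finset.sum_mul]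
      have h2 : ∑ v' : {x // c x = i}, P ↑v' * q i v' (E s i) = PG i * m i (E s i) := by
        rw [hm, Finset.mul_sum]
        refine Finset.sum_congr rfl fun v' _ => ?_
        field_simp
        exact (mul_div_cancel_right₀ _ (hPGne i)).symm
      rw [h2, mul_assoc,
        Finset.mul_prod_erase Finset.univ (fun j => m j (E s j)) (Finset.mem_univ i)]
    rw [Finset.sum_congr rfl (fun i _ => step i), ← Finset.sum_mul, hPGsum, one_mul]
  refine ⟨Q, ⟨hQ0, hQ1, hsupp⟩, ?_⟩
  have main : MuI P Q = ∑ i, PG i *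
      MuI (fun v : {v // c v = i} => P v.1 / PG i) (q i) := by
    calc MuI P Q
        = ∑ i, ∑ v' : {x // c x = i}, ∑ s : Finset V,
            P ↑v' * Q ↑v' s * Real.log (Q ↑v' s / ∏ j, m j (E s j)) := by
          rw [MuI]
          simp_rw [hQmarg]
          rw [← Finset.sum_fiberwise Finset.univ c
            (fun v => ∑ s : Finset V, P v * Q v s * Real.log (Q v s / ∏ j, m j (E s j)))]
          exact Finset.sum_congr rfl fun i _ =>
            Finset.sum_subtype (p := fun x => c x = i) _ (by simp) _
      _ = ∑ i, ∑ v' : {x // c x = i}, P ↑v' *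
            ∑ t, q i v' t * Real.log (q i v' t / m i t) := by
          refine Finset.sum_congr rfl fun i _ => Finset.sum_congr rfl fun v' _ => ?_
          rw [← Equiv.sum_comp E.symm
            (fun s => P ↑v' * Q ↑v' s * Real.log (Q ↑v' s / ∏ j, m j (E s j)))]
          have hterm : ∀ p : ∀ j : Fin k, Finset {x // c x = j},
              P ↑v' * Q ↑v' (E.symm p) *
                Real.log (Q ↑v' (E.symm p) / ∏ j, m j (E (E.symm p) j))
              = (P ↑v' * (q i v' (p i) * Real.log (q i v' (p i) / m i (p i)))) *
                  ∏ j ∈ Finset.univ.erase i, m j (p j) := by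
            intro p
            rw [hQeq' i v' (E.symm p)]
            simp only [Equiv.apply_symm_apply]
            have hMC : ∏ j, m j (p j)
                = m i (p i) * ∏ j ∈ Finset.univ.erase i, m j (p j) :=
              (Finset.mul_prod_erase Finset.univ _ (Finset.mem_univ i)).symm
            rw [hMC]
            rcases eq_or_ne (∏ j ∈ Finset.univ.erase i, m j (p j)) 0 with hC | hC
            · rw [hC]; ring_nf
            · rw [mul_div_mul_right _ _ hC]; ring
          simp_rw [hterm]
          rw [sum_pi_single c i
            (fun t => P ↑v' * (q i v' t * Real.log (q i v' t / m i t))) m hm1,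
            ← Finset.mul_sum]
      _ = ∑ i, PG i * MuI (fun v : {v // c v = i} => P v.1 / PG i) (q i) := by
          refine Finset.sum_congr rfl fun i _ => ?_
          rw [MuI, Finset.mul_sum]
          refine Finset.sum_congr rfl fun v' _ => ?_
          rw [Finset.mul_sum, Finset.mul_sum]
          refine Finset.sum_congr rfl fun t _ => ?_
          have hmt : (∑ v'' : {x // c x = i}, P v''.1 / PG i * q i v'' t) = m i t := rfl
          rw [hmt]
          field_simp
          exact (mul_div_cancel_right₀ _ (hPGne i)).symm
  rw [main]


lemma pos_left_of_mul_pos {a b : ℝ} (h : 0 < a * b) (hb : 0 ≤ a) : 0 < a := by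
  rcases eq_or_lt_of_le hb with h' | h'
  · exfalso; rw [← h', zero_mul] at h; exact lt_irrefl 0 h
  · exact h'

lemma pos_right_of_mul_pos {a b : ℝ} (h : 0 < a * b) (hb : 0 ≤ b) : 0 < b := by
  rcases eq_or_lt_of_le hb with h' | h'
  · exfalso; rw [← h', mul_zero] at h; exact lt_irrefl 0 h
  · exact h'

lemma exists_pos_of_sum_pos {α : Type*} (f : α → ℝ) (u : Finset α)
    (h0 : ∀ x ∈ u, 0 ≤ f x) (hs : 0 < ∑ x ∈ u, f x) : ∃ x ∈ u, 0 < f x := by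
  by_contra hcon
  push_neg at hcon
  have : ∑ x ∈ u, f x = 0 :=
    Finset.sum_eq_zero fun x hx => le_antisymm (hcon x hx) (h0 x hx)
  rw [this] at hs
  exact lt_irrefl 0 hs

lemma lower_construction (G : SimpleGraph V) (c : V → Fin k)
    (P : V → ℝ) (hP0 : ∀ v, 0 ≤ P v) (hP1 : ∑ v, P v = 1)
    (hpos : ∀ i : Fin k, 0 < ∑ v ∈ Finset.univ.filter (fun v => c v = i), P v)
    (Q : V → Finset V → ℝ) (hQ : Feas G Q) :
    ∃ q : ∀ i : Fin k, {v // c v = i} → Finset {v // c v = i} → ℝ,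
      (∀ i, Feas (G.comap (Subtype.val : {v // c v = i} → V)) (q i)) ∧
      ∑ i : Fin k,
        (∑ v ∈ Finset.univ.filter (fun v => c v = i), P v) *
          MuI (fun v : {v // c v = i} =>
              P v.1 / ∑ v' ∈ Finset.univ.filter (fun v' => c v' = i), P v') (q i)
        ≤ MuI P Q := by
  classical
  obtain ⟨hQ0, hQ1, hQsupp⟩ := hQ
  set E := finsetPiEquiv c with hE
  set PG : Fin k → ℝ := fun i => ∑ v ∈ Finset.univ.filter (fun v => c v = i), P v with hPG
  have hPGpos : ∀ i, 0 < PG i := hpos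
  have hPGne : ∀ i, PG i ≠ 0 := fun i => ne_of_gt (hPGpos i)
  have hsubPG : ∀ i, ∑ v' : {v // c v = i}, P v'.1 = PG i := fun i =>
    (Finset.sum_subtype (p := fun x => c x = i) _ (by simp) P).symm
  set qr : ∀ i : Fin k, {v // c v = i} → Finset {v // c v = i} → ℝ :=
    fun i v t => ∑ s ∈ Finset.univ.filter (fun s => E s i = t), Q ↑v s with hqr
  set Qm : Finset V → ℝ := fun s => ∑ v' : V, P v' * Q v' s with hQm
  set Bm : ∀ i : Fin k, Finset {v // c v = i} → ℝ :=
    fun i t => ∑ s ∈ Finset.univ.filter (fun s => E s i = t), Qm s with hBm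
  set Mi : ∀ i : Fin k, Finset {v // c v = i} → ℝ :=
    fun i t => ∑ v' : {v // c v = i}, P v'.1 * qr i v' t with hMi
  have hqr0 : ∀ i v t, 0 ≤ qr i v t := fun i v t =>
    Finset.sum_nonneg fun s _ => hQ0 _ s
  have hqr1 : ∀ i v, ∑ t, qr i v t = 1 := fun i v => by
    rw [hqr]
    rw [Finset.sum_fiberwise Finset.univ (fun s => E s i) (Q ↑v)]
    exact hQ1 ↑v
  have hQm0 : ∀ s, 0 ≤ Qm s := fun s =>
    Finset.sum_nonneg fun v' _ => mul_nonneg (hP0 v') (hQ0 v' s)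
  have hQmge : ∀ v s, P v * Q v s ≤ Qm s := fun v s =>
    Finset.single_le_sum (fun v' _ => mul_nonneg (hP0 v') (hQ0 v' s)) (mem_univ v)
  have hBm0 : ∀ i t, 0 ≤ Bm i t := fun i t =>
    Finset.sum_nonneg fun s _ => hQm0 s
  have hMi0 : ∀ i t, 0 ≤ Mi i t := fun i t =>
    Finset.sum_nonneg fun v' _ => mul_nonneg (hP0 _) (hqr0 i v' t)
  have hQmsum : ∑ s : Finset V, Qm s = 1 := by
    rw [hQm, Finset.sum_comm]
    simp_rw [← Finset.mul_sum, hQ1, mul_one]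
    exact hP1
  have hBmsum : ∀ i, ∑ t, Bm i t = 1 := fun i => by
    rw [hBm]
    rw [Finset.sum_fiberwise Finset.univ (fun s => E s i) Qm]
    exact hQmsum
  have hMisum : ∀ i, ∑ t, Mi i t = PG i := fun i => by
    rw [hMi, Finset.sum_comm]
    simp_rw [← Finset.mul_sum, hqr1, mul_one]
    exact hsubPG i
  -- feasibility of the restrictions
  have hfeas : ∀ i, Feas (G.comap (Subtype.val : {v // c v = i} → V)) (qr i) := by
    intro i
    refine ⟨hqr0 i, hqr1 i, ?_⟩
    intro v t h
    obtain ⟨s, hs, hQpos⟩ := exists_pos_of_sum_pos _ _ (fun s _ => hQ0 _ s) h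
    have hst : E s i = t := (Finset.mem_filter.mp hs).2
    obtain ⟨hmem, hpair⟩ := hQsupp _ _ hQpos
    constructor
    · rw [← hst]
      exact (mem_finsetPiEquiv c s i v).mpr hmem
    · intro a ha b hb hab hadj
      rw [← hst] at ha hb
      have ha' : ↑a ∈ s := (mem_finsetPiEquiv c s i a).mp ha
      have hb' : ↑b ∈ s := (mem_finsetPiEquiv c s i b).mp hb
      exact hpair ha' hb' (fun hcon => hab (Subtype.ext hcon)) hadj
  -- positivity transfer
  have hBmpos : ∀ (i : Fin k) (t : Finset {v // c v = i}) (v : {v // c v = i}),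
      0 < P v.1 * qr i v t → 0 < Bm i t := by
    intro i t v h
    have hPv : 0 < P v.1 := pos_left_of_mul_pos h (hP0 v.1)
    have hqrpos : 0 < qr i v t := pos_right_of_mul_pos h (hqr0 i v t)
    obtain ⟨s, hsmem, hQpos⟩ := exists_pos_of_sum_pos _ _ (fun s _ => hQ0 _ s) hqrpos
    have hQms : 0 < Qm s := lt_of_lt_of_le (mul_pos hPv hQpos) (hQmge _ s)
    exact lt_of_lt_of_le hQms
      (Finset.single_le_sum (fun s' _ => hQm0 s') hsmem)
  have hMige : ∀ (i : Fin k) (t : Finset {v // c v = i}) (v : {v // c v = i}),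
      P v.1 * qr i v t ≤ Mi i t := fun i t v =>
    Finset.single_le_sum (fun v' _ => mul_nonneg (hP0 _) (hqr0 i v' t)) (mem_univ v)
  -- chain 1
  have chain1 : ∀ (i : Fin k) (v : {v // c v = i}),
      ∑ t, (P v.1 * qr i v t) * Real.log ((P v.1 * qr i v t) / (P v.1 * Bm i t)) ≤
        ∑ s : Finset V, P v.1 * Q ↑v s * Real.log (Q ↑v s / Qm s) := by
    intro i v
    rw [← Finset.sum_fiberwise Finset.univ (fun s => E s i)
      (fun s => P v.1 * Q ↑v s * Real.log (Q ↑v s / Qm s))]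
    apply Finset.sum_le_sum
    intro t _
    have e1 : P v.1 * qr i v t
        = ∑ s ∈ Finset.univ.filter (fun s => E s i = t), P v.1 * Q ↑v s :=
      Finset.mul_sum _ _ _
    have e2 : P v.1 * Bm i t
        = ∑ s ∈ Finset.univ.filter (fun s => E s i = t), P v.1 * Qm s :=
      Finset.mul_sum _ _ _
    calc (P v.1 * qr i v t) * Real.log ((P v.1 * qr i v t) / (P v.1 * Bm i t))
        = (∑ s ∈ Finset.univ.filter (fun s => E s i = t), P v.1 * Q ↑v s) *
            Real.log ((∑ s ∈ Finset.univ.filter (fun s => E s i = t), P v.1 * Q ↑v s) /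
              (∑ s ∈ Finset.univ.filter (fun s => E s i = t), P v.1 * Qm s)) := by
          rw [← e1, ← e2]
      _ ≤ ∑ s ∈ Finset.univ.filter (fun s => E s i = t),
            (P v.1 * Q ↑v s) * Real.log ((P v.1 * Q ↑v s) / (P v.1 * Qm s)) := by
          apply log_sum_ineq
          · exact fun s _ => mul_nonneg (hP0 _) (hQ0 _ s)
          · exact fun s _ => mul_nonneg (hP0 _) (hQm0 s)
          · intro s _ hp
            have hPv : 0 < P v.1 := pos_left_of_mul_pos hp (hP0 v.1)
            exact mul_pos hPv (lt_of_lt_of_le hp (hQmge _ s))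
      _ = ∑ s ∈ Finset.univ.filter (fun s => E s i = t),
            P v.1 * Q ↑v s * Real.log (Q ↑v s / Qm s) :=
          Finset.sum_congr rfl fun s _ => cancel_log_term _ _ _ (hP0 v.1)
  -- termwise log identity
  have hterm : ∀ (i : Fin k) (v : {v // c v = i}) (t : Finset {v // c v = i}),
      P v.1 * qr i v t * Real.log (qr i v t / Bm i t)
        = P v.1 * qr i v t * Real.log (qr i v t * PG i / Mi i t)
          + P v.1 * qr i v t * Real.log (Mi i t / (PG i * Bm i t)) := by
    intro i v t
    rcases eq_or_lt_of_le (mul_nonneg (hP0 v.1) (hqr0 i v t)) with h | h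
    · rw [← h]; ring
    · have hPv : 0 < P v.1 := pos_left_of_mul_pos h (hP0 v.1)
      have hqrpos : 0 < qr i v t := pos_right_of_mul_pos h (hqr0 i v t)
      have hMipos : 0 < Mi i t := lt_of_lt_of_le h (hMige i t v)
      have hBmp : 0 < Bm i t := hBmpos i t v h
      rw [Real.log_div (ne_of_gt hqrpos) (ne_of_gt hBmp),
        Real.log_div (mul_ne_zero (ne_of_gt hqrpos) (hPGne i)) (ne_of_gt hMipos),
        Real.log_mul (ne_of_gt hqrpos) (hPGne i),
        Real.log_div (ne_of_gt hMipos) (mul_ne_zero (hPGne i) (ne_of_gt hBmp)),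
        Real.log_mul (hPGne i) (ne_of_gt hBmp)]
      ring
  -- D_i nonneg
  have hD : ∀ i : Fin k,
      0 ≤ ∑ t, Mi i t * Real.log (Mi i t / (PG i * Bm i t)) := by
    intro i
    have key := log_sum_ineq Finset.univ (fun t => Mi i t)
      (fun t => PG i * Bm i t)
      (fun t _ => hMi0 i t) (fun t _ => mul_nonneg (hPGpos i).le (hBm0 i t))
      (fun t _ hp => by
        obtain ⟨v', _, hv'⟩ := exists_pos_of_sum_pos _ _
          (fun v' _ => mul_nonneg (hP0 _) (hqr0 i v' t)) hp
        exact mul_pos (hPGpos i) (hBmpos i t v' hv'))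
    rw [hMisum i, ← Finset.mul_sum, hBmsum i, mul_one, div_self (hPGne i),
      Real.log_one, mul_zero] at key
    exact key
  -- chain 2 per component
  have chain2 : ∀ i : Fin k,
      ∑ v : {v // c v = i}, ∑ t, P v.1 * qr i v t *
          Real.log (qr i v t * PG i / Mi i t)
        ≤ ∑ v : {v // c v = i}, ∑ t, P v.1 * qr i v t *
            Real.log (qr i v t / Bm i t) := by
    intro i
    have hsplit : ∑ v : {v // c v = i}, ∑ t, P v.1 * qr i v t *
        Real.log (qr i v t / Bm i t)
        = (∑ v : {v // c v = i}, ∑ t, P v.1 * qr i v t *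
            Real.log (qr i v t * PG i / Mi i t))
          + ∑ t, Mi i t * Real.log (Mi i t / (PG i * Bm i t)) := by
      calc ∑ v : {v // c v = i}, ∑ t, P v.1 * qr i v t *
            Real.log (qr i v t / Bm i t)
          = ∑ v : {v // c v = i}, ∑ t,
              (P v.1 * qr i v t * Real.log (qr i v t * PG i / Mi i t)
                + P v.1 * qr i v t * Real.log (Mi i t / (PG i * Bm i t))) :=
            Finset.sum_congr rfl fun v _ =>
              Finset.sum_congr rfl fun t _ => hterm i v t
        _ = (∑ v : {v // c v = i}, ∑ t, P v.1 * qr i v t *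
              Real.log (qr i v t * PG i / Mi i t))
            + ∑ v : {v // c v = i}, ∑ t, P v.1 * qr i v t *
                Real.log (Mi i t / (PG i * Bm i t)) := by
            simp_rw [Finset.sum_add_distrib]
        _ = (∑ v : {v // c v = i}, ∑ t, P v.1 * qr i v t *
              Real.log (qr i v t * PG i / Mi i t))
            + ∑ t, Mi i t * Real.log (Mi i t / (PG i * Bm i t)) := by
            congr 1
            rw [Finset.sum_comm]
            refine Finset.sum_congr rfl fun t _ => ?_
            rw [← Finset.sum_mul]
    rw [hsplit]
    have := hD i
    linarith
  -- identification of PG i * MuI with A_i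
  have hA : ∀ i : Fin k, PG i * MuI (fun v : {v // c v = i} => P v.1 / PG i) (qr i)
      = ∑ v : {v // c v = i}, ∑ t, P v.1 * qr i v t *
          Real.log (qr i v t * PG i / Mi i t) := by
    intro i
    rw [MuI, Finset.mul_sum]
    refine Finset.sum_congr rfl fun v _ => ?_
    rw [Finset.mul_sum]
    refine Finset.sum_congr rfl fun t _ => ?_
    have hden : (∑ v' : {x // c x = i}, P v'.1 / PG i * qr i v' t) = Mi i t / PG i := by
      simp_rw [div_mul_eq_mul_div]
      exact (Finset.sum_div _ _ _).symm
    rw [hden, div_div_eq_mul_div]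
    field_simp
    rw [eq_comm, eq_div_iff (hPGne i)]; ring
  -- final assembly
  refine ⟨qr, hfeas, ?_⟩
  have hQmr : ∀ s, (∑ v' : V, P v' * Q v' s) = Qm s := fun s => rfl
  have final : MuI P Q = ∑ i : Fin k, ∑ v : {v // c v = i}, ∑ s : Finset V,
      P v.1 * Q ↑v s * Real.log (Q ↑v s / Qm s) := by
    rw [MuI]
    simp_rw [hQmr]
    rw [← Finset.sum_fiberwise Finset.univ c
      (fun v => ∑ s : Finset V, P v * Q v s * Real.log (Q v s / Qm s))]
    exact Finset.sum_congr rfl fun i _ =>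
      Finset.sum_subtype (p := fun x => c x = i) _ (by simp) _
  rw [final]
  apply Finset.sum_le_sum
  intro i _
  calc PG i * MuI (fun v : {v // c v = i} => P v.1 / PG i) (qr i)
      = ∑ v : {v // c v = i}, ∑ t, P v.1 * qr i v t *
          Real.log (qr i v t * PG i / Mi i t) := hA i
    _ ≤ ∑ v : {v // c v = i}, ∑ t, P v.1 * qr i v t *
          Real.log (qr i v t / Bm i t) := chain2 i
    _ = ∑ v : {v // c v = i}, ∑ t, (P v.1 * qr i v t) *
          Real.log ((P v.1 * qr i v t) / (P v.1 * Bm i t)) :=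
        Finset.sum_congr rfl fun v _ => Finset.sum_congr rfl fun t _ =>
          (cancel_log_term _ _ _ (hP0 v.1)).symm
    _ ≤ ∑ v : {v // c v = i}, ∑ s : Finset V,
          P v.1 * Q ↑v s * Real.log (Q ↑v s / Qm s) :=
        Finset.sum_le_sum fun v _ => chain1 i v



end

/-- If the connected components of `G` are `G₁, …, G_k` (indexed
by `c : V → Fin k`) with `P(Gᵢ) > 0`, then
`H_G(X) = Σᵢ P(Gᵢ) · H_{Gᵢ}(Xᵢ)` where `Xᵢ` has distribution `P(x)/P(Gᵢ)` on
the component `Gᵢ`. -/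
theorem stmt12 {V : Type*} [Fintype V] [DecidableEq V]
    (G : SimpleGraph V) (P : V → ℝ)
    (hP0 : ∀ v, 0 ≤ P v) (hP1 : ∑ v, P v = 1)
    (k : ℕ) (c : V → Fin k)
    (hc : ∀ u v : V, G.Reachable u v ↔ c u = c v)
    (hpos : ∀ i : Fin k, 0 < ∑ v ∈ Finset.univ.filter (fun v => c v = i), P v) :
    graphEntropy G P =
      ∑ i : Fin k,
        (∑ v ∈ Finset.univ.filter (fun v => c v = i), P v) *
          graphEntropy (G.comap (Subtype.val : {v // c v = i} → V))
            (fun v => P v.1 / ∑ v' ∈ Finset.univ.filter (fun v' => c v' = i), P v') := by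
  classical
  set PG : Fin k → ℝ := fun i => ∑ v ∈ Finset.univ.filter (fun v => c v = i), P v with hPG
  have hPGpos : ∀ i, 0 < PG i := hpos
  have hPGsum : ∑ i, PG i = 1 := by
    rw [hPG, Finset.sum_fiberwise Finset.univ c P]; exact hP1
  have hPi0 : ∀ (i : Fin k) (v : {v // c v = i}), 0 ≤ P v.1 / PG i :=
    fun i v => div_nonneg (hP0 v.1) (hPGpos i).le
  have hPi1 : ∀ i : Fin k, ∑ v : {v // c v = i}, P v.1 / PG i = 1 := by
    intro i
    have hsub : (∑ v : {v // c v = i}, P v.1) = PG i :=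
      (Finset.sum_subtype (p := fun x => c x = i)
        (Finset.univ.filter (fun x => c x = i)) (by simp) P).symm
    rw [← Finset.sum_div, hsub, div_self (ne_of_gt (hPGpos i))]
  apply le_antisymm
  · -- upper bound
    refine le_of_forall_pos_le_add ?_
    intro ε hε
    have hne : ∀ i : Fin k,
        { r : ℝ | ∃ q, Feas (G.comap (Subtype.val : {v // c v = i} → V)) q ∧
            r = MuI (fun v : {v // c v = i} => P v.1 / PG i) q }.Nonempty :=
      fun i => graphEntropy_set_nonempty _ _
    have hchoice : ∀ i : Fin k, ∃ r ∈
        { r : ℝ | ∃ q, Feas (G.comap (Subtype.val : {v // c v = i} → V)) q ∧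
            r = MuI (fun v : {v // c v = i} => P v.1 / PG i) q },
        r < sInf { r : ℝ | ∃ q, Feas (G.comap (Subtype.val : {v // c v = i} → V)) q ∧
            r = MuI (fun v : {v // c v = i} => P v.1 / PG i) q } + ε :=
      fun i => Real.lt_sInf_add_pos (hne i) hε
    choose r hrmem hrlt using hchoice
    have hq : ∀ i : Fin k, ∃ q, Feas (G.comap (Subtype.val : {v // c v = i} → V)) q ∧
        r i = MuI (fun v : {v // c v = i} => P v.1 / PG i) q := hrmem
    choose q hqfeas hrq using hq
    obtain ⟨Q, hQfeas, hQval⟩ := upper_construction G c hc P hP0 hP1 hpos q hqfeas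
    have h1 : graphEntropy G P ≤ MuI P Q := graphEntropy_le G P hP0 hP1 Q hQfeas
    rw [hQval] at h1
    refine h1.trans ?_
    calc ∑ i : Fin k, PG i * MuI (fun v : {v // c v = i} => P v.1 / PG i) (q i)
        = ∑ i : Fin k, PG i * r i :=
          Finset.sum_congr rfl fun i _ => by rw [hrq i]
      _ ≤ ∑ i : Fin k, PG i * (sInf { r : ℝ | ∃ q,
            Feas (G.comap (Subtype.val : {v // c v = i} → V)) q ∧
            r = MuI (fun v : {v // c v = i} => P v.1 / PG i) q } + ε) :=
          Finset.sum_le_sum fun i _ =>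
            mul_le_mul_of_nonneg_left (hrlt i).le (hPGpos i).le
      _ = (∑ i : Fin k, PG i * sInf { r : ℝ | ∃ q,
            Feas (G.comap (Subtype.val : {v // c v = i} → V)) q ∧
            r = MuI (fun v : {v // c v = i} => P v.1 / PG i) q }) + ε := by
          simp_rw [mul_add]
          rw [Finset.sum_add_distrib, ← Finset.sum_mul, hPGsum, one_mul]
      _ = (∑ i : Fin k, PG i * graphEntropy (G.comap (Subtype.val : {v // c v = i} → V))
            (fun v : {v // c v = i} => P v.1 / PG i)) + ε := by
          refine congrArg (· + ε) (Finset.sum_congr rfl fun i _ => ?_)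
          rw [graphEntropy_eq]
  · -- lower bound
    apply le_graphEntropy
    intro Q hQ
    obtain ⟨q, hqfeas, hsum⟩ := lower_construction G c P hP0 hP1 hpos Q hQ
    refine le_trans ?_ hsum
    apply Finset.sum_le_sum
    intro i _
    refine mul_le_mul_of_nonneg_left ?_ (hPGpos i).le
    exact graphEntropy_le _ _ (hPi0 i) (hPi1 i) (q i) (hqfeas i)
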